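/- Let r : (p₁,p₂) → (0,∞) be a smooth function with r'(q) ≠ 0 for all q, and let b : (p₁,p₂) → ℝ be smooth. On the domain D = {(q,x) : q ∈ (p₁,p₂), |x| < r(q)} define f(q,x) = −√(r(q)² − x²), uˣ(q,x) = √(r(q)² − x²)/√(r(q)·|r'(q)|), and uʸ(q) = b(q). Then these functions, regarded as independent of y, satisfy the system: (i) ∂(f'_p uˣ)/∂x = 0; (ii) uˣ ∂uˣ/∂x + f'_x/|f'_p| = 0; (iii) uˣ ∂uʸ/∂x + f'_y/|f'_p| = 0 (trivially, since uʸ and f are independent of y here means f'_y = 0 and ∂uʸ/∂x = 0); (iv) f''_{xx}(uˣ)² = (1 + f'_x²)/|f'_p|, where f'_p = ∂f/∂q, f'_x = ∂f/∂x, f''_{xx} = ∂²f/∂x². -/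

import Mathlib

/-- the explicit axisymmetric solution of the graph system (5.12)–(5.15).
With `f(q,x) = −√(r(q)² − x²)`, `uˣ(q,x) = √(r(q)² − x²)/√(r(q)·|r'(q)|)`, `uʸ(q) = b(q)`
(all independent of `y`), the four equations of the system hold on
`D = {(q,x) : q ∈ (p₁,p₂), |x| < r(q)}`. -/
theorem axisymmetric_explicit_solution (p₁ p₂ : ℝ)
    (r b : ℝ → ℝ)
    (hr : ContDiffOn ℝ (⊤ : ℕ∞) r (Set.Ioo p₁ p₂))
    (hb : ContDiffOn ℝ (⊤ : ℕ∞) b (Set.Ioo p₁ p₂))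
    (hrpos : ∀ q ∈ Set.Ioo p₁ p₂, 0 < r q)
    (hr' : ∀ q ∈ Set.Ioo p₁ p₂, deriv r q ≠ 0)
    (f ux : ℝ → ℝ → ℝ) (uy : ℝ → ℝ)
    (hf : ∀ q x, f q x = -Real.sqrt (r q ^ 2 - x ^ 2))
    (hux : ∀ q x, ux q x = Real.sqrt (r q ^ 2 - x ^ 2) / Real.sqrt (r q * |deriv r q|))
    (huy : ∀ q, uy q = b q) :
    ∀ q ∈ Set.Ioo p₁ p₂, ∀ x : ℝ, |x| < r q →
      -- (i)  ∂(f'_p uˣ)/∂x = 0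
      deriv (fun t => deriv (fun s => f s t) q * ux q t) x = 0 ∧
      -- (ii) uˣ ∂uˣ/∂x + f'_x/|f'_p| = 0
      ux q x * deriv (fun t => ux q t) x
        + deriv (fun t => f q t) x / |deriv (fun s => f s x) q| = 0 ∧
      -- (iii) uˣ ∂uʸ/∂x + f'_y/|f'_p| = 0 (trivially: uʸ and f are independent of y)
      ux q x * deriv (fun _ : ℝ => uy q) x
        + deriv (fun _ : ℝ => f q x) x / |deriv (fun s => f s x) q| = 0 ∧
      -- (iv) f''_{xx}(uˣ)² = (1 + f'_x²)/|f'_p|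
      deriv (fun t => deriv (fun s => f q s) t) x * (ux q x) ^ 2
        = (1 + (deriv (fun t => f q t) x) ^ 2) / |deriv (fun s => f s x) q| := by
  intro q hq x hx
  have hR : 0 < r q := hrpos q hq
  have hr'0 : deriv r q ≠ 0 := hr' q hq
  have hrd : DifferentiableAt ℝ r q :=
    ((hr.differentiableOn (by simp)) q hq).differentiableAt (isOpen_Ioo.mem_nhds hq)
  have hxx := abs_lt.mp hx
  have hs : 0 < r q ^ 2 - x ^ 2 := by nlinarith [hxx.1, hxx.2]
  set sq : ℝ := Real.sqrt (r q ^ 2 - x ^ 2) with hsq_def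
  have hsq : 0 < sq := Real.sqrt_pos.mpr hs
  have hsq2 : sq ^ 2 = r q ^ 2 - x ^ 2 := Real.sq_sqrt hs.le
  set C : ℝ := Real.sqrt (r q * |deriv r q|) with hC_def
  have hC : 0 < C := Real.sqrt_pos.mpr (mul_pos hR (abs_pos.mpr hr'0))
  have hC2 : C ^ 2 = r q * |deriv r q| := Real.sq_sqrt (mul_pos hR (abs_pos.mpr hr'0)).le
  -- derivative of t ↦ √(r q² − t²)
  have hsqrt : ∀ t : ℝ, |t| < r q →
      HasDerivAt (fun u => Real.sqrt (r q ^ 2 - u ^ 2))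
        (-t / Real.sqrt (r q ^ 2 - t ^ 2)) t := by
    intro t ht
    have htt := abs_lt.mp ht
    have hpos : 0 < r q ^ 2 - t ^ 2 := by nlinarith [htt.1, htt.2]
    have h1 : HasDerivAt (fun u : ℝ => r q ^ 2 - u ^ 2) (-(2 * t)) t := by
      simpa using (hasDerivAt_pow 2 t).const_sub (r q ^ 2)
    have h2 := h1.sqrt (ne_of_gt hpos)
    convert h2 using 1
    have hne : Real.sqrt (r q ^ 2 - t ^ 2) ≠ 0 := (Real.sqrt_pos.mpr hpos).ne'
    field_simp
  -- derivative of t ↦ f q t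
  have hfx : ∀ t : ℝ, |t| < r q →
      HasDerivAt (fun u => f q u) (t / Real.sqrt (r q ^ 2 - t ^ 2)) t := by
    intro t ht
    have h := (hsqrt t ht).fun_neg
    have hfun : (fun u => f q u) = fun u => -Real.sqrt (r q ^ 2 - u ^ 2) :=
      funext fun u => hf q u
    rw [hfun]
    simpa [neg_div] using h
  -- derivative of s ↦ f s t at q
  have hfq : ∀ t : ℝ, |t| < r q →
      HasDerivAt (fun s => f s t)
        (-(r q * deriv r q) / Real.sqrt (r q ^ 2 - t ^ 2)) q := by
    intro t ht
    have htt := abs_lt.mp ht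
    have hpos : 0 < r q ^ 2 - t ^ 2 := by nlinarith [htt.1, htt.2]
    have h1 : HasDerivAt (fun s => r s ^ 2 - t ^ 2) (2 * r q * deriv r q) q := by
      have := (hrd.hasDerivAt.pow 2).sub_const (t ^ 2)
      simpa [mul_assoc] using this
    have h2 := (h1.sqrt (by simpa using ne_of_gt hpos)).fun_neg
    have hfun : (fun s => f s t) = fun s => -Real.sqrt (r s ^ 2 - t ^ 2) :=
      funext fun s => hf s t
    rw [hfun]
    refine h2.congr_deriv ?_
    have hne : Real.sqrt (r q ^ 2 - t ^ 2) ≠ 0 := (Real.sqrt_pos.mpr hpos).ne'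
    ring
  -- neighbourhood fact
  have hmem : ∀ᶠ t in nhds x, |t| < r q := by
    have hIoo : Set.Ioo (-(r q)) (r q) ∈ nhds x :=
      isOpen_Ioo.mem_nhds (by exact ⟨hxx.1, hxx.2⟩)
    filter_upwards [hIoo] with t ht
    exact abs_lt.mpr ⟨ht.1, ht.2⟩
  -- |f'_p|
  have hfqd : deriv (fun s => f s x) q = -(r q * deriv r q) / sq := (hfq x hx).deriv
  have habs : |deriv (fun s => f s x) q| = r q * |deriv r q| / sq := by
    rw [hfqd, abs_div, abs_neg, abs_mul, abs_of_pos hR, abs_of_pos hsq]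
  have hfxd : deriv (fun t => f q t) x = x / sq := (hfx x hx).deriv
  refine ⟨?_, ?_, ?_, ?_⟩
  · -- (i)
    have heq : (fun t => deriv (fun s => f s t) q * ux q t)
        =ᶠ[nhds x] fun _ => -(r q * deriv r q) / C := by
      filter_upwards [hmem] with t ht
      have htt := abs_lt.mp ht
      have hpos : 0 < r q ^ 2 - t ^ 2 := by nlinarith [htt.1, htt.2]
      have hne : Real.sqrt (r q ^ 2 - t ^ 2) ≠ 0 := (Real.sqrt_pos.mpr hpos).ne'
      rw [(hfq t ht).deriv, hux, ← hC_def]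
      field_simp
    rw [heq.deriv_eq, deriv_const]
  · -- (ii)
    have hDux : deriv (fun t => ux q t) x = (-x / sq) / C := by
      have hfun : (fun t => ux q t) = fun t => Real.sqrt (r q ^ 2 - t ^ 2) / C :=
        funext fun t => hux q t
      rw [hfun]
      exact ((hsqrt x hx).div_const C).deriv
    rw [hDux, hfxd, habs, hux, ← hC_def, ← hC2]
    field_simp
    ring
  · -- (iii)
    simp [deriv_const]
  · -- (iv)
    have hD2 : deriv (fun t => deriv (fun s => f q s) t) x
        = (1 * sq - x * (-x / sq)) / sq ^ 2 := by
      have heq : (fun t => deriv (fun s => f q s) t)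
          =ᶠ[nhds x] fun t => t / Real.sqrt (r q ^ 2 - t ^ 2) := by
        filter_upwards [hmem] with t ht
        exact (hfx t ht).deriv
      rw [heq.deriv_eq]
      exact ((hasDerivAt_id x).div (hsqrt x hx) hsq.ne').deriv
    rw [hD2, hfxd, habs, hux, ← hC_def, ← hC2]
    field_simp
    linear_combination (-(sq ^ 2 * x ^ 2 * C ^ 2) - sq ^ 4 * C ^ 2 + sq ^ 2 * C ^ 2 * (sq ^ 2 + x ^ 2)) * hsq2
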